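/- Let L ≥ 1 and ρ ≥ 1 be natural numbers, P a finite type, and γ₀, γ∞ : P → (Fin 3 → Fin L) maps each of whose fibers has at most ρ elements. Then there exist maps γ₁₀, γ₀₁ : P → (Fin 3 → Fin L) such that: (a) for every p, γ₁₀(p) agrees with γ₀(p) in the first two coordinates; (b) for every p, γ₀₁(p) agrees with γ∞(p) in the first two coordinates; (c) for every p, γ₁₀(p) and γ₀₁(p) agree in the third coordinate; and (d) every fiber of γ₁₀ and every fiber of γ₀₁ has at most ρ elements. -/

import Mathlib

open Finset

private lemma fiber_sum {P α : Type} [DecidableEq α] (f : P → α) (Q : Finset P) (s : Finset α) :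
    (Q.filter fun p => f p ∈ s).card = ∑ v ∈ s, (Q.filter fun p => f p = v).card := by
  classical
  rw [Finset.card_eq_sum_card_fiberwise (f := f) (s := Q.filter fun p => f p ∈ s) (t := s)
    (fun x hx => (Finset.mem_filter.mp hx).2)]
  apply Finset.sum_congr rfl
  intro v hv
  congr 1
  ext p
  simp only [Finset.mem_filter]
  constructor
  · rintro ⟨⟨hQ, _⟩, h2⟩; exact ⟨hQ, h2⟩
  · rintro ⟨hQ, h2⟩; exact ⟨⟨hQ, h2 ▸ hv⟩, h2⟩

private lemma regDecomp {P α : Type} [Fintype α] [DecidableEq α] (f g : P → α) :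
    ∀ (n : ℕ) (Q : Finset P),
      (∀ v, (Q.filter fun p => f p = v).card = n) →
      (∀ v, (Q.filter fun p => g p = v).card = n) →
      ∃ c : P → ℕ, (∀ p ∈ Q, c p < n) ∧
        (∀ v z, (Q.filter fun p => f p = v ∧ c p = z).card ≤ 1) ∧
        (∀ v z, (Q.filter fun p => g p = v ∧ c p = z).card ≤ 1) := by
  classical
  intro n
  induction n with
  | zero =>
    intro Q hf _
    have hQ : Q = ∅ := by
      by_contra h
      obtain ⟨p, hp⟩ := Finset.nonempty_iff_ne_empty.mpr h
      have h0 := hf (f p)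
      have hm : p ∈ Q.filter fun q => f q = f p := Finset.mem_filter.mpr ⟨hp, rfl⟩
      rw [Finset.card_eq_zero] at h0
      simp [h0] at hm
    subst hQ
    exact ⟨fun _ => 0, by simp, by simp, by simp⟩
  | succ n ih =>
    intro Q hf hg
    set t : α → Finset α := fun v => (Q.filter fun p => f p = v).image g with ht
    have hall : ∀ s : Finset α, s.card ≤ (s.biUnion t).card := by
      intro s
      have h1 : (Q.filter fun p => f p ∈ s).card = (n+1) * s.card := by
        rw [fiber_sum f Q s]
        simp [hf, mul_comm]
      have h2 : (Q.filter fun p => g p ∈ s.biUnion t).card = (n+1) * (s.biUnion t).card := by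
        rw [fiber_sum g Q _]
        simp [hg, mul_comm]
      have hsub : (Q.filter fun p => f p ∈ s) ⊆ (Q.filter fun p => g p ∈ s.biUnion t) := by
        intro p hp
        obtain ⟨hQ, hfs⟩ := Finset.mem_filter.mp hp
        refine Finset.mem_filter.mpr ⟨hQ, Finset.mem_biUnion.mpr ⟨f p, hfs, ?_⟩⟩
        exact Finset.mem_image.mpr ⟨p, Finset.mem_filter.mpr ⟨hQ, rfl⟩, rfl⟩
      have hle := Finset.card_le_card hsub
      rw [h1, h2] at hle
      exact Nat.le_of_mul_le_mul_left hle (Nat.succ_pos n)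
    obtain ⟨M, Minj, hM⟩ := (Finset.all_card_le_biUnion_card_iff_exists_injective t).mp hall
    have hmex : ∀ v, ∃ p, p ∈ Q ∧ f p = v ∧ g p = M v := by
      intro v
      obtain ⟨p, hp, hgp⟩ := Finset.mem_image.mp (hM v)
      obtain ⟨hQ, hfp⟩ := Finset.mem_filter.mp hp
      exact ⟨p, hQ, hfp, hgp⟩
    choose m hmQ hmf hmg using hmex
    have Mbij : Function.Bijective M := Finite.injective_iff_bijective.mp Minj
    set S : Finset P := Finset.image m Finset.univ with hS
    have hfS : ∀ v, (Q.filter fun p => f p = v ∧ p ∈ S) = {m v} := by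
      intro v
      ext p
      simp only [Finset.mem_filter, Finset.mem_singleton]
      constructor
      · rintro ⟨hQ, hfp, hpS⟩
        obtain ⟨u, -, rfl⟩ := Finset.mem_image.mp hpS
        rw [hmf u] at hfp
        rw [hfp]
      · rintro rfl
        exact ⟨hmQ v, hmf v, Finset.mem_image.mpr ⟨v, Finset.mem_univ v, rfl⟩⟩
    have hgS : ∀ w, (Q.filter fun p => g p = w ∧ p ∈ S)
        = {m ((Equiv.ofBijective M Mbij).symm w)} := by
      intro w
      have hMu : M ((Equiv.ofBijective M Mbij).symm w) = w :=
        (Equiv.ofBijective M Mbij).apply_symm_apply w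
      ext p
      simp only [Finset.mem_filter, Finset.mem_singleton]
      constructor
      · rintro ⟨hQ, hgp, hpS⟩
        obtain ⟨u', -, rfl⟩ := Finset.mem_image.mp hpS
        rw [hmg u'] at hgp
        have : u' = (Equiv.ofBijective M Mbij).symm w := Minj (by rw [hgp, hMu])
        rw [this]
      · rintro rfl
        exact ⟨hmQ _, by rw [hmg, hMu],
          Finset.mem_image.mpr ⟨_, Finset.mem_univ _, rfl⟩⟩
    set Q' := Q.filter (fun p => p ∉ S) with hQ'
    have hsplit : ∀ (h : P → α) (v : α),
        (Q.filter fun p => h p = v ∧ p ∈ S).card + (Q'.filter fun p => h p = v).card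
          = (Q.filter fun p => h p = v).card := by
      intro h v
      have key := Finset.card_filter_add_card_filter_not
        (s := Q.filter fun p => h p = v) (p := fun p => p ∈ S)
      have e1 : ((Q.filter fun p => h p = v).filter fun p => p ∈ S)
          = (Q.filter fun p => h p = v ∧ p ∈ S) := by
        rw [Finset.filter_filter]
      have e2 : ((Q.filter fun p => h p = v).filter fun p => ¬ p ∈ S)
          = (Q'.filter fun p => h p = v) := by
        rw [Finset.filter_filter, hQ', Finset.filter_filter]
        apply Finset.filter_congr
        intro p _
        exact ⟨fun ⟨a, b⟩ => ⟨b, a⟩, fun ⟨a, b⟩ => ⟨b, a⟩⟩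
      rw [e1, e2] at key
      exact key
    have hf' : ∀ v, (Q'.filter fun p => f p = v).card = n := by
      intro v
      have := hsplit f v
      rw [hfS v, hf v, Finset.card_singleton] at this
      omega
    have hg' : ∀ v, (Q'.filter fun p => g p = v).card = n := by
      intro v
      have := hsplit g v
      rw [hgS v, hg v, Finset.card_singleton] at this
      omega
    obtain ⟨c', hlt, hcf, hcg⟩ := ih Q' hf' hg'
    refine ⟨fun p => if p ∈ S then n else c' p, ?_, ?_, ?_⟩
    · intro p hp
      by_cases hpS : p ∈ S
      · simp [hpS]
      · simp only [hpS, if_false]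
        exact Nat.lt_succ_of_lt (hlt p (Finset.mem_filter.mpr ⟨hp, hpS⟩))
    · intro v z
      by_cases hz : z < n
      · refine le_trans (Finset.card_le_card ?_) (hcf v z)
        intro p hp
        obtain ⟨hQp, hfp, hcp⟩ := Finset.mem_filter.mp hp
        by_cases hpS : p ∈ S
        · simp only [hpS, if_true] at hcp; omega
        · simp only [hpS, if_false] at hcp
          exact Finset.mem_filter.mpr ⟨Finset.mem_filter.mpr ⟨hQp, hpS⟩, hfp, hcp⟩
      · have : (Q.filter fun p => f p = v ∧ (if p ∈ S then n else c' p) = z) ⊆ {m v} := by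
          intro p hp
          obtain ⟨hQp, hfp, hcp⟩ := Finset.mem_filter.mp hp
          by_cases hpS : p ∈ S
          · rw [← hfS v]
            exact Finset.mem_filter.mpr ⟨hQp, hfp, hpS⟩
          · simp only [hpS, if_false] at hcp
            have := hlt p (Finset.mem_filter.mpr ⟨hQp, hpS⟩)
            omega
        exact le_trans (Finset.card_le_card this) (by simp)
    · intro v z
      by_cases hz : z < n
      · refine le_trans (Finset.card_le_card ?_) (hcg v z)
        intro p hp
        obtain ⟨hQp, hgp, hcp⟩ := Finset.mem_filter.mp hp
        by_cases hpS : p ∈ S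
        · simp only [hpS, if_true] at hcp; omega
        · simp only [hpS, if_false] at hcp
          exact Finset.mem_filter.mpr ⟨Finset.mem_filter.mpr ⟨hQp, hpS⟩, hgp, hcp⟩
      · have : (Q.filter fun p => g p = v ∧ (if p ∈ S then n else c' p) = z)
            ⊆ {m ((Equiv.ofBijective M Mbij).symm v)} := by
          intro p hp
          obtain ⟨hQp, hgp, hcp⟩ := Finset.mem_filter.mp hp
          by_cases hpS : p ∈ S
          · rw [← hgS v]
            exact Finset.mem_filter.mpr ⟨hQp, hgp, hpS⟩
          · simp only [hpS, if_false] at hcp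
            have := hlt p (Finset.mem_filter.mpr ⟨hQp, hpS⟩)
            omega
        exact le_trans (Finset.card_le_card this) (by simp)

private lemma sigma_fiber_card {α : Type} [Fintype α] [DecidableEq α] (d : α → ℕ) (v : α) :
    ((Finset.univ : Finset (Σ u : α, Fin (d u))).filter fun x => x.1 = v).card = d v := by
  classical
  have h : ((Finset.univ : Finset (Σ u : α, Fin (d u))).filter fun x => x.1 = v)
      = ({v} : Finset α).sigma (fun u => Finset.univ) := by
    ext x
    simp [Finset.mem_sigma]
  rw [h, Finset.card_sigma]
  simp

private lemma sum_filter_card {β γ : Type} [Fintype β] [Fintype γ] (p : β ⊕ γ → Prop)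
    [DecidablePred p] :
    ((Finset.univ : Finset (β ⊕ γ)).filter p).card
      = (Finset.univ.filter fun b => p (Sum.inl b)).card
        + (Finset.univ.filter fun c => p (Sum.inr c)).card := by
  classical
  have h : (Finset.univ : Finset (β ⊕ γ)).filter p
      = (Finset.univ.filter fun b => p (Sum.inl b)).disjSum
          (Finset.univ.filter fun c => p (Sum.inr c)) := by
    ext x
    cases x <;> simp
  rw [h, Finset.card_disjSum]

private lemma colorize {P α : Type} [Fintype P] [Fintype α] [DecidableEq α]
    (f g : P → α) (n : ℕ)
    (hf : ∀ v, (Finset.univ.filter fun p => f p = v).card ≤ n)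
    (hg : ∀ v, (Finset.univ.filter fun p => g p = v).card ≤ n) :
    ∃ c : P → ℕ, (∀ p, c p < n) ∧
      (∀ v z, (Finset.univ.filter fun p => f p = v ∧ c p = z).card ≤ 1) ∧
      (∀ v z, (Finset.univ.filter fun p => g p = v ∧ c p = z).card ≤ 1) := by
  classical
  set df : α → ℕ := fun v => n - (Finset.univ.filter fun p => f p = v).card with hdf
  set dg : α → ℕ := fun v => n - (Finset.univ.filter fun p => g p = v).card with hdg
  have hfn : ∀ v, (Finset.univ.filter fun p => f p = v).card + df v = n :=
    fun v => Nat.add_sub_cancel' (hf v)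
  have hgn : ∀ v, (Finset.univ.filter fun p => g p = v).card + dg v = n :=
    fun v => Nat.add_sub_cancel' (hg v)
  have hPf : ∑ v, (Finset.univ.filter fun p => f p = v).card = Fintype.card P := by
    rw [← Finset.card_univ, Finset.card_eq_sum_card_fiberwise (f := f) (t := Finset.univ)
      (fun x _ => Finset.mem_univ _)]
  have hPg : ∑ v, (Finset.univ.filter fun p => g p = v).card = Fintype.card P := by
    rw [← Finset.card_univ, Finset.card_eq_sum_card_fiberwise (f := g) (t := Finset.univ)
      (fun x _ => Finset.mem_univ _)]
  have hsum : ∑ v, df v = ∑ v, dg v := by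
    have h1 : ∑ v, ((Finset.univ.filter fun p => f p = v).card + df v)
        = Fintype.card α * n := by simp [hfn, Finset.card_univ]
    have h2 : ∑ v, ((Finset.univ.filter fun p => g p = v).card + dg v)
        = Fintype.card α * n := by simp [hgn, Finset.card_univ]
    rw [Finset.sum_add_distrib, hPf] at h1
    rw [Finset.sum_add_distrib, hPg] at h2
    omega
  have hcard : Fintype.card (Σ v : α, Fin (df v)) = Fintype.card (Σ v : α, Fin (dg v)) := by
    simp [Fintype.card_sigma, hsum]
  let e : (Σ v : α, Fin (df v)) ≃ (Σ v : α, Fin (dg v)) := Fintype.equivOfCardEq hcard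
  set F : P ⊕ (Σ v : α, Fin (df v)) → α := Sum.elim f (fun x => x.1) with hF
  set G : P ⊕ (Σ v : α, Fin (df v)) → α := Sum.elim g (fun x => (e x).1) with hG
  have hFc : ∀ v, (Finset.univ.filter fun x => F x = v).card = n := by
    intro v
    rw [sum_filter_card]
    simp only [hF, Sum.elim_inl, Sum.elim_inr]
    rw [sigma_fiber_card df v]
    exact hfn v
  have hGc : ∀ v, (Finset.univ.filter fun x => G x = v).card = n := by
    intro v
    rw [sum_filter_card]
    simp only [hG, Sum.elim_inl, Sum.elim_inr]
    have he : (Finset.univ.filter fun x : (Σ v : α, Fin (df v)) => (e x).1 = v).card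
        = (Finset.univ.filter fun y : (Σ v : α, Fin (dg v)) => y.1 = v).card := by
      apply Finset.card_bij' (fun x _ => e x) (fun y _ => e.symm y) <;> simp
    rw [he, sigma_fiber_card dg v]
    exact hgn v
  obtain ⟨c', hlt, hcf, hcg⟩ := regDecomp F G n Finset.univ hFc hGc
  refine ⟨fun p => c' (Sum.inl p), fun p => hlt _ (Finset.mem_univ _), ?_, ?_⟩
  · intro v z
    refine le_trans ?_ (hcf v z)
    apply Finset.card_le_card_of_injOn (fun p => Sum.inl p)
    · intro p hp
      obtain ⟨-, h1, h2⟩ := Finset.mem_filter.mp hp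
      exact Finset.mem_filter.mpr ⟨Finset.mem_univ _, h1, h2⟩
    · intro a _ b _ h
      exact Sum.inl_injective h
  · intro v z
    refine le_trans ?_ (hcg v z)
    apply Finset.card_le_card_of_injOn (fun p => Sum.inl p)
    · intro p hp
      obtain ⟨-, h1, h2⟩ := Finset.mem_filter.mp hp
      exact Finset.mem_filter.mpr ⟨Finset.mem_univ _, h1, h2⟩
    · intro a _ b _ h
      exact Sum.inl_injective h

/-- **Color route theorem in three dimensions.**
Packets `P` have sources `γ₀ p` and destinations `γ∞ p` in the grid `[L]³`
(`Fin 3 → Fin L`), with at most `ρ` packets at any source or destination point.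
Then there are intermediate points `γ₁₀ p` (agreeing with the source in the first
two coordinates) and `γ₀₁ p` (agreeing with the destination in the first two
coordinates), agreeing with each other in the third coordinate, such that at most
`ρ` packets occupy any intermediate point. -/
theorem stmt8 (L ρ : ℕ) (hL : 1 ≤ L) (hρ : 1 ≤ ρ)
    (P : Type) [Fintype P] (γ₀ γinf : P → (Fin 3 → Fin L))
    (h₀ : ∀ v : Fin 3 → Fin L, (Finset.univ.filter fun p : P => γ₀ p = v).card ≤ ρ)
    (hinf : ∀ v : Fin 3 → Fin L, (Finset.univ.filter fun p : P => γinf p = v).card ≤ ρ) :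
    ∃ γ₁₀ γ₀₁ : P → (Fin 3 → Fin L),
      (∀ p : P, ∀ i : Fin 3, i ≠ 2 → γ₁₀ p i = γ₀ p i) ∧
      (∀ p : P, ∀ i : Fin 3, i ≠ 2 → γ₀₁ p i = γinf p i) ∧
      (∀ p : P, γ₁₀ p 2 = γ₀₁ p 2) ∧
      (∀ v : Fin 3 → Fin L, (Finset.univ.filter fun p : P => γ₁₀ p = v).card ≤ ρ) ∧
      (∀ v : Fin 3 → Fin L, (Finset.univ.filter fun p : P => γ₀₁ p = v).card ≤ ρ) := by
  classical
  have key : ∀ γ : P → (Fin 3 → Fin L),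
      (∀ v : Fin 3 → Fin L, (Finset.univ.filter fun p : P => γ p = v).card ≤ ρ) →
      ∀ v : Fin L × Fin L,
        (Finset.univ.filter fun p : P => (γ p 0, γ p 1) = v).card ≤ ρ * L := by
    intro γ hγ v
    have hsub : (Finset.univ.filter fun p : P => (γ p 0, γ p 1) = v)
        ⊆ (Finset.univ : Finset (Fin L)).biUnion
            (fun z => Finset.univ.filter fun p : P => γ p = ![v.1, v.2, z]) := by
      intro p hp
      obtain ⟨-, hfp⟩ := Finset.mem_filter.mp hp
      have h0 : γ p 0 = v.1 := by rw [← hfp]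
      have h1 : γ p 1 = v.2 := by rw [← hfp]
      refine Finset.mem_biUnion.mpr ⟨γ p 2, Finset.mem_univ _,
        Finset.mem_filter.mpr ⟨Finset.mem_univ _, ?_⟩⟩
      funext i
      fin_cases i <;> simp [h0, h1]
    calc (Finset.univ.filter fun p : P => (γ p 0, γ p 1) = v).card
        ≤ _ := Finset.card_le_card hsub
      _ ≤ ∑ z : Fin L, (Finset.univ.filter fun p : P => γ p = ![v.1, v.2, z]).card :=
          Finset.card_biUnion_le
      _ ≤ ∑ _z : Fin L, ρ := Finset.sum_le_sum fun z _ => hγ _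
      _ = L * ρ := by simp [Finset.card_univ, mul_comm]
      _ = ρ * L := mul_comm L ρ
  obtain ⟨c, hc, hcf, hcg⟩ := colorize (fun p => (γ₀ p 0, γ₀ p 1))
    (fun p => (γinf p 0, γinf p 1)) (ρ * L) (key γ₀ h₀) (key γinf hinf)
  have hzlt : ∀ p, c p / ρ < L := by
    intro p
    rw [Nat.div_lt_iff_lt_mul hρ]
    calc c p < ρ * L := hc p
      _ = L * ρ := mul_comm ρ L
  set zc : P → Fin L := fun p => ⟨c p / ρ, hzlt p⟩ with hzc
  have main : ∀ (γ : P → (Fin 3 → Fin L))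
      (hone : ∀ v z, (Finset.univ.filter
          fun p : P => (γ p 0, γ p 1) = v ∧ c p = z).card ≤ 1),
      ∀ v : Fin 3 → Fin L,
      (Finset.univ.filter fun p : P => ![γ p 0, γ p 1, zc p] = v).card ≤ ρ := by
    intro γ hone v
    have hsub : (Finset.univ.filter fun p : P => ![γ p 0, γ p 1, zc p] = v)
        ⊆ (Finset.range ρ).biUnion (fun j => Finset.univ.filter
            fun p : P => (γ p 0, γ p 1) = (v 0, v 1) ∧ c p = (v 2 : ℕ) * ρ + j) := by
      intro p hp
      obtain ⟨-, hpv⟩ := Finset.mem_filter.mp hp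
      have h0 : γ p 0 = v 0 := by rw [← hpv]; simp
      have h1 : γ p 1 = v 1 := by rw [← hpv]; simp
      have h2 : zc p = v 2 := by rw [← hpv]; simp
      have h2' : c p / ρ = (v 2 : ℕ) := congrArg Fin.val h2
      refine Finset.mem_biUnion.mpr ⟨c p % ρ, Finset.mem_range.mpr (Nat.mod_lt _ hρ),
        Finset.mem_filter.mpr ⟨Finset.mem_univ _, by rw [h0, h1], ?_⟩⟩
      rw [← h2']
      exact (Nat.div_add_mod' (c p) ρ).symm
    calc (Finset.univ.filter fun p : P => ![γ p 0, γ p 1, zc p] = v).card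
        ≤ _ := Finset.card_le_card hsub
      _ ≤ ∑ j ∈ Finset.range ρ, (Finset.univ.filter
            fun p : P => (γ p 0, γ p 1) = (v 0, v 1) ∧ c p = (v 2 : ℕ) * ρ + j).card :=
          Finset.card_biUnion_le
      _ ≤ ∑ _j ∈ Finset.range ρ, 1 := Finset.sum_le_sum fun j _ => hone _ _
      _ = ρ := by simp
  refine ⟨fun p => ![γ₀ p 0, γ₀ p 1, zc p], fun p => ![γinf p 0, γinf p 1, zc p],
    ?_, ?_, ?_, main γ₀ hcf, main γinf hcg⟩
  · intro p i hi
    fin_cases i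
    · rfl
    · rfl
    · exact absurd rfl hi
  · intro p i hi
    fin_cases i
    · rfl
    · rfl
    · exact absurd rfl hi
  · intro p
    rfl
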